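/- For every t > 0 and every z ∈ ℝ one has min(t^{g⁻ − 1}, t^{g⁺ − 1}) · |g(z)| ≤ |g(tz)| ≤ max(t^{g⁻ − 1}, t^{g⁺ − 1}) · |g(z)|. -/

import Mathlib

theorem aux_mono5 (g : ℝ → ℝ) (c z : ℝ)
    (hgd : ∀ s : ℝ, 0 < s → DifferentiableAt ℝ g s)
    (hb : ∀ s : ℝ, 0 < s → c * g s ≤ deriv g s * s)
    (hz : 0 < z) :
    MonotoneOn (fun t : ℝ => g (t * z) * t ^ (-c)) (Set.Ioi (0:ℝ)) := by
  have hderiv : ∀ t : ℝ, 0 < t → HasDerivAt (fun t : ℝ => g (t*z) * t ^ (-c))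
      (deriv g (t*z) * z * t ^ (-c) + g (t*z) * (-c * t ^ (-c - 1))) t := by
    intro t ht
    have h1 : HasDerivAt (fun t : ℝ => g (t*z)) (deriv g (t*z) * z) t := by
      have := ((hgd (t*z) (mul_pos ht hz)).hasDerivAt).comp t (hasDerivAt_mul_const z)
      exact this
    have h2 : HasDerivAt (fun t : ℝ => t ^ (-c)) (-c * t ^ (-c - 1)) t :=
      Real.hasDerivAt_rpow_const (Or.inl ht.ne')
    exact h1.mul h2
  apply monotoneOn_of_deriv_nonneg (convex_Ioi 0)
  · exact fun t ht => (hderiv t ht).continuousAt.continuousWithinAt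
  · intro t ht
    rw [interior_Ioi] at ht
    exact (hderiv t ht).differentiableAt.differentiableWithinAt
  · intro t ht
    rw [interior_Ioi] at ht
    rw [(hderiv t ht).deriv]
    have hs := mul_pos ht hz
    have hb' := hb (t*z) hs
    have hpow : (0:ℝ) < t ^ (-c - 1) := Real.rpow_pos_of_pos ht _
    have hsplit : t ^ (-c) = t * t ^ (-c - 1) := by
      have h := Real.rpow_add ht 1 (-c - 1)
      rw [Real.rpow_one] at h
      rw [← h]
      congr 1
      ring
    rw [hsplit]
    have key : c * g (t*z) * t ^ (-c-1) ≤ deriv g (t*z) * (t*z) * t ^ (-c-1) :=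
      mul_le_mul_of_nonneg_right hb' hpow.le
    nlinarith [key]

/-- For every `t > 0` and `z ∈ ℝ`,
`min (t^{g⁻-1}) (t^{g⁺-1}) * |g z| ≤ |g (t*z)| ≤ max (t^{g⁻-1}) (t^{g⁺-1}) * |g z|`. -/
theorem stmt_5 (a g : ℝ → ℝ) (gm gp : ℝ)
    (hg_def : ∀ t : ℝ, g t = a |t| * t)
    (ha_diff : ∀ t : ℝ, 0 < t → DifferentiableAt ℝ a t)
    (ha_pos : ∀ t : ℝ, 0 < t → 0 < a t)
    (hg_odd : ∀ t : ℝ, g (-t) = - g t)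
    (hg_mono : StrictMono g) (hg_surj : Function.Surjective g) (hg_cont : Continuous g)
    (hgm : 1 < gm) (hgmgp : gm ≤ gp)
    (hbound : ∀ t : ℝ, 0 < t →
      gm - 1 ≤ deriv g t * t / g t ∧ deriv g t * t / g t ≤ gp - 1) :
    ∀ t : ℝ, 0 < t → ∀ z : ℝ,
      min (t ^ (gm - 1)) (t ^ (gp - 1)) * |g z| ≤ |g (t * z)| ∧
      |g (t * z)| ≤ max (t ^ (gm - 1)) (t ^ (gp - 1)) * |g z| := by
  have g0 : g 0 = 0 := by rw [hg_def]; simp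
  have hgpos : ∀ s : ℝ, 0 < s → 0 < g s := by
    intro s hs
    have := hg_mono hs
    rwa [g0] at this
  have hgd : ∀ s : ℝ, 0 < s → DifferentiableAt ℝ g s := by
    intro s hs
    have heq : g =ᶠ[nhds s] fun t => a t * t := by
      filter_upwards [Ioi_mem_nhds hs] with t ht
      rw [hg_def, abs_of_pos ht]
    exact ((ha_diff s hs).mul differentiableAt_id).congr_of_eventuallyEq heq
  have hlow : ∀ s : ℝ, 0 < s → (gm - 1) * g s ≤ deriv g s * s := by
    intro s hs
    exact (le_div_iff₀ (hgpos s hs)).mp (hbound s hs).1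
  have hup : ∀ s : ℝ, 0 < s → deriv g s * s ≤ (gp - 1) * g s := by
    intro s hs
    exact (div_le_iff₀ (hgpos s hs)).mp (hbound s hs).2
  -- core inequality for positive z
  have core : ∀ t : ℝ, 0 < t → ∀ z : ℝ, 0 < z →
      min (t ^ (gm - 1)) (t ^ (gp - 1)) * g z ≤ g (t * z) ∧
      g (t * z) ≤ max (t ^ (gm - 1)) (t ^ (gp - 1)) * g z := by
    intro t ht z hz
    have M := aux_mono5 g (gm - 1) z hgd hlow hz
    have A := aux_mono5 (fun s => -g s) (gp - 1) z (fun s hs => (hgd s hs).neg)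
      (by
        intro s hs
        have hd : deriv (fun s => -g s) s = -deriv g s := deriv.neg
        rw [hd]
        have := hup s hs
        nlinarith) hz
    have hpm : (0:ℝ) < t ^ (gm - 1) := Real.rpow_pos_of_pos ht _
    have hpp : (0:ℝ) < t ^ (gp - 1) := Real.rpow_pos_of_pos ht _
    have h1mem : (1:ℝ) ∈ Set.Ioi (0:ℝ) := by norm_num
    have htmem : t ∈ Set.Ioi (0:ℝ) := ht
    rcases le_total 1 t with h1 | h1
    · have m1 := M h1mem htmem h1
      have a1 := A h1mem htmem h1
      simp only [one_mul, Real.one_rpow, mul_one] at m1 a1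
      rw [Real.rpow_neg ht.le, ← div_eq_mul_inv, le_div_iff₀ hpm] at m1
      rw [Real.rpow_neg ht.le] at a1
      have a1' : g (t * z) * (t ^ (gp - 1))⁻¹ ≤ g z := by nlinarith
      rw [← div_eq_mul_inv, div_le_iff₀ hpp] at a1'
      have hmin : min (t ^ (gm - 1)) (t ^ (gp - 1)) = t ^ (gm - 1) :=
        min_eq_left (Real.rpow_le_rpow_of_exponent_le h1 (by linarith))
      have hmax : max (t ^ (gm - 1)) (t ^ (gp - 1)) = t ^ (gp - 1) :=
        max_eq_right (Real.rpow_le_rpow_of_exponent_le h1 (by linarith))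
      rw [hmin, hmax]
      constructor <;> nlinarith
    · have m1 := M htmem h1mem h1
      have a1 := A htmem h1mem h1
      simp only [one_mul, Real.one_rpow, mul_one] at m1 a1
      rw [Real.rpow_neg ht.le, ← div_eq_mul_inv, div_le_iff₀ hpm] at m1
      rw [Real.rpow_neg ht.le] at a1
      have a1' : g z ≤ g (t * z) * (t ^ (gp - 1))⁻¹ := by nlinarith
      rw [← div_eq_mul_inv, le_div_iff₀ hpp] at a1'
      have hmin : min (t ^ (gm - 1)) (t ^ (gp - 1)) = t ^ (gp - 1) :=
        min_eq_right (Real.rpow_le_rpow_of_exponent_ge ht h1 (by linarith))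
      have hmax : max (t ^ (gm - 1)) (t ^ (gp - 1)) = t ^ (gm - 1) :=
        max_eq_left (Real.rpow_le_rpow_of_exponent_ge ht h1 (by linarith))
      rw [hmin, hmax]
      constructor <;> nlinarith
  intro t ht z
  rcases lt_trichotomy z 0 with hz | hz | hz
  · have hz' : 0 < -z := by linarith
    obtain ⟨c1, c2⟩ := core t ht (-z) hz'
    have e1 : g z = -g (-z) := by rw [hg_odd z, neg_neg]
    have e2 : g (t * z) = -g (t * (-z)) := by
      have : t * z = -(t * (-z)) := by ring
      rw [this, hg_odd]
    have p1 : 0 < g (-z) := hgpos _ hz'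
    have p2 : 0 < g (t * (-z)) := hgpos _ (mul_pos ht hz')
    rw [e1, e2, abs_neg, abs_neg, abs_of_pos p1, abs_of_pos p2]
    exact ⟨c1, c2⟩
  · subst hz
    simp [g0]
  · obtain ⟨c1, c2⟩ := core t ht z hz
    rw [abs_of_pos (hgpos z hz), abs_of_pos (hgpos _ (mul_pos ht hz))]
    exact ⟨c1, c2⟩
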